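/- Neumann's Lemma: Let K be an (additive, not necessarily abelian) group, H a subgroup, and (G_i)_{i∈I} a finite family of subgroups with cosets c_i + G_i. If a coset c + H is contained in the union ⋃_{i∈I} (c_i + G_i), then c + H is contained in ⋃_{i∈I₀} (c_i + G_i), where I₀ = {i ∈ I : [H : H ∩ G_i] is finite}. -/

import Mathlib

open scoped Pointwise

/-- Neumann's Lemma: if a coset `c + H` is covered by a finite union of cosets
`c_i + G_i`, then it is covered by just those `c_i + G_i` with `[H : H ∩ G_i]`
finite (index `0` means infinite). -/
theorem stmt10 {K : Type*} [AddGroup K] {ι : Type*} (I : Finset ι)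
    (H : AddSubgroup K) (G : ι → AddSubgroup K) (c : K) (cc : ι → K)
    (hcov : (c +ᵥ (H : Set K)) ⊆ ⋃ i ∈ I, (cc i +ᵥ ((G i : AddSubgroup K) : Set K))) :
    (c +ᵥ (H : Set K)) ⊆
      ⋃ i ∈ I.filter (fun i => (G i).relIndex H ≠ 0),
        (cc i +ᵥ ((G i : AddSubgroup K) : Set K)) := by
  classical
  set J : Finset ι := I.filter (fun i => ∃ h : H, (c + (h : K)) ∈ cc i +ᵥ (G i : Set K))
    with hJdef
  have hdex : ∀ i : ι, ∃ h : H, i ∈ J → (c + (h : K)) ∈ cc i +ᵥ (G i : Set K) := by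
    intro i
    by_cases hi : i ∈ J
    · obtain ⟨h, hh⟩ := (Finset.mem_filter.mp hi).2
      exact ⟨h, fun _ => hh⟩
    · exact ⟨0, fun h => absurd h hi⟩
  choose d hd using hdex
  have hmemK : ∀ (i : ι), i ∈ J → ∀ (h : H),
      ((h : H) ∈ d i +ᵥ (((G i).addSubgroupOf H : AddSubgroup H) : Set H)
        ↔ (c + (h : K)) ∈ cc i +ᵥ (G i : Set K)) := by
    intro i hi h
    obtain ⟨g1, hg1, hg1'⟩ := hd i hi
    simp only [vadd_eq_add] at hg1'
    constructor
    · rintro ⟨y, hy, rfl⟩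
      refine ⟨g1 + (y : K), (G i).add_mem hg1 hy, ?_⟩
      simp only [vadd_eq_add]
      push_cast
      rw [← add_assoc, ← add_assoc, ← hg1']
    · rintro ⟨g2, hg2, hg2'⟩
      simp only [vadd_eq_add] at hg2'
      refine ⟨-(d i) + h, ?_, by simp⟩
      have hmem2 : ((-(d i) + h : H) : K) ∈ G i := by
        push_cast
        have e1 : (h : K) = -c + (cc i + g2) := by rw [hg2', neg_add_cancel_left]
        have e2 : ((d i : H) : K) = -c + (cc i + g1) := by rw [hg1', neg_add_cancel_left]
        rw [e1, e2]
        have : -(-c + (cc i + g1)) + (-c + (cc i + g2)) = -g1 + g2 := by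
          simp [neg_add_rev, add_assoc]
        rw [this]
        exact (G i).add_mem ((G i).neg_mem hg1) hg2
      exact hmem2
  have hcovers : ⋃ i ∈ J, d i +ᵥ (((G i).addSubgroupOf H : AddSubgroup H) : Set H)
      = Set.univ := by
    ext h
    simp only [Set.mem_iUnion, Set.mem_univ, iff_true]
    have hx : (c + (h : K)) ∈ c +ᵥ (H : Set K) := ⟨h, h.2, rfl⟩
    obtain ⟨i, hi, hmem⟩ := by simpa using hcov hx
    have hiJ : i ∈ J := Finset.mem_filter.mpr ⟨hi, ⟨h, hmem⟩⟩
    exact ⟨i, hiJ, (hmemK i hiJ h).mpr hmem⟩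
  have hfil := AddSubgroup.leftCoset_cover_filter_FiniteIndex (s := J)
    (H := fun i => (G i).addSubgroupOf H) (g := d) hcovers
  rintro x ⟨h, hh, rfl⟩
  have : (⟨h, hh⟩ : H) ∈ (Set.univ : Set H) := Set.mem_univ _
  rw [← hfil] at this
  simp only [Set.mem_iUnion] at this
  obtain ⟨i, hi, hmem⟩ := this
  obtain ⟨hiJ, hfi⟩ := Finset.mem_filter.mp hi
  refine Set.mem_biUnion (Finset.mem_filter.mpr ⟨(Finset.mem_filter.mp hiJ).1, ?_⟩)
    ((hmemK i hiJ ⟨h, hh⟩).mp hmem)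
  have : ((G i).addSubgroupOf H).index ≠ 0 := hfi.index_ne_zero
  simpa [AddSubgroup.relIndex] using this
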